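/- Let r ≥ 1 be an integer and let D¹, D² be diagonal matrices whose entries are Laurent polynomials supported in degrees −r,…,0, such that the coefficient of z^{−r} in each of D¹ and D² is a diagonal matrix with pairwise distinct diagonal entries. Then there exists g ∈ GL_n(F) with g·D¹·g^{-1} − τ(g)·g^{-1} = D² if and only if there exist w ∈ S_n with permutation matrix P and a ∈ ℤ^n such that D² = P·D¹·P^{-1} − diag(a_1,…,a_n). -/

import Mathlib

noncomputable section

open Polynomial Matrix

variable {k : Type*} [Field k]

/-- The derivation `τ = z·d/dz` on `k((z))`, acting coefficientwise by `n`. -/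
def tauF (f : LaurentSeries k) : LaurentSeries k :=
  ⟨fun n => (n : k) * f.coeff n,
    f.isPWO_support'.mono (fun n hn => by
      simp only [Function.mem_support, ne_eq] at hn ⊢
      exact fun h => hn (by rw [h, mul_zero]))⟩

namespace Stmt14Aux

lemma tauF_coeff (f : LaurentSeries k) (m : ℤ) : (tauF f).coeff m = (m : k) * f.coeff m := rfl

lemma tauF_zero : tauF (0 : LaurentSeries k) = 0 := by
  ext m; simp [tauF_coeff]

lemma tauF_single (a : ℤ) (c : k) :
    tauF (HahnSeries.single a c) = HahnSeries.single a ((a : k) * c) := by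
  ext m
  by_cases h : m = a
  · subst h; simp [tauF_coeff]
  · simp [tauF_coeff, HahnSeries.coeff_single_of_ne h]

lemma ode [CharZero k] {f c : LaurentSeries k} (hf : f ≠ 0)
    (heq : tauF f = c * f) (hc : ∀ m : ℤ, 0 < m → c.coeff m = 0) :
    c = HahnSeries.single 0 ((f.order : ℤ) : k) := by
  have hford := HahnSeries.coeff_order_eq_zero.not.2 hf
  by_cases hc0 : c = 0
  · subst hc0
    have h0 := congrArg (fun x => HahnSeries.coeff x f.order) heq
    simp only [tauF_coeff, HahnSeries.coeff_zero, zero_mul] at h0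
    have : (f.order : k) = 0 := by
      rcases mul_eq_zero.1 h0 with h | h
      · exact h
      · exact absurd h hford
    rw [this]
    simp
  · have horder : 0 ≤ c.order := by
      by_contra hlt
      push_neg at hlt
      have hmul := HahnSeries.coeff_mul_order_add_order c f
      have hne : (c * f).coeff (c.order + f.order) ≠ 0 := by
        rw [hmul]
        exact mul_ne_zero (HahnSeries.leadingCoeff_ne_zero.mpr hc0)
          (HahnSeries.leadingCoeff_ne_zero.mpr hf)
      have hzero : (tauF f).coeff (c.order + f.order) = 0 := by
        rw [tauF_coeff, HahnSeries.coeff_eq_zero_of_lt_order (by linarith), mul_zero]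
      rw [heq] at hzero
      exact hne hzero
    have hcs : c = HahnSeries.single 0 (c.coeff 0) := by
      ext m
      rcases lt_trichotomy m 0 with h | h | h
      · rw [HahnSeries.coeff_eq_zero_of_lt_order (lt_of_lt_of_le h horder),
          HahnSeries.coeff_single_of_ne (ne_of_lt h)]
      · subst h; rw [HahnSeries.coeff_single_same]
      · rw [hc m h, HahnSeries.coeff_single_of_ne (ne_of_gt h)]
    have h0 := congrArg (fun x => HahnSeries.coeff x f.order) heq
    simp only [tauF_coeff] at h0
    rw [hcs] at h0
    have hsm : (HahnSeries.single (0:ℤ) (c.coeff 0) * f).coeff f.order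
        = c.coeff 0 * f.coeff f.order := by
      have := HahnSeries.coeff_single_mul_add (r := c.coeff 0) (x := f)
        (a := f.order) (b := (0:ℤ))
      rwa [add_zero] at this
    rw [hsm] at h0
    have : c.coeff 0 = (f.order : k) := (mul_right_cancel₀ hford h0.symm)
    rw [hcs, this]

lemma intCast_eq_single (d : ℤ) :
    ((d : ℤ) : LaurentSeries k) = HahnSeries.single (0:ℤ) ((d : ℤ) : k) := by
  have := map_intCast (HahnSeries.C : k →+* HahnSeries ℤ k) d
  rw [← this, HahnSeries.C_apply]

variable {n : ℕ}

def Pmat (w : Equiv.Perm (Fin n)) : Matrix (Fin n) (Fin n) (LaurentSeries k) :=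
  Matrix.of fun i j => if i = w j then (1 : LaurentSeries k) else 0

lemma Pmat_mul_transpose (w : Equiv.Perm (Fin n)) :
    (Pmat (k := k) w) * (Pmat (k := k) w)ᵀ = 1 := by
  refine Matrix.ext fun i j => ?_
  rw [Matrix.mul_apply, Finset.sum_eq_single (w.symm i)]
  · simp only [Pmat, Matrix.transpose_apply, Matrix.of_apply, Equiv.apply_symm_apply,
      if_pos rfl, one_mul, Matrix.one_apply]
    by_cases h : i = j
    · subst h; simp
    · simp [Ne.symm h, h]
  · intro l _ hl
    have hi : ¬ i = w l := fun h => hl (by rw [h, Equiv.symm_apply_apply])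
    simp [Pmat, hi]
  · intro h; exact absurd (Finset.mem_univ _) h

lemma Pmat_conj_diagonal (w : Equiv.Perm (Fin n)) (d : Fin n → LaurentSeries k) :
    (Pmat (k := k) w) * Matrix.diagonal d * (Pmat (k := k) w)ᵀ
      = Matrix.diagonal (fun i => d (w.symm i)) := by
  refine Matrix.ext fun i j => ?_
  rw [Matrix.mul_apply, Finset.sum_eq_single (w.symm i)]
  · simp only [Pmat, Matrix.mul_diagonal, Matrix.transpose_apply, Matrix.of_apply,
      Equiv.apply_symm_apply, if_pos rfl, one_mul, Matrix.diagonal_apply]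
    by_cases h : i = j
    · subst h; simp
    · simp [Ne.symm h, h]
  · intro l _ hl
    have hi : ¬ i = w l := fun h => hl (by rw [h, Equiv.symm_apply_apply])
    simp [Pmat, Matrix.mul_diagonal, hi]
  · intro h; exact absurd (Finset.mem_univ _) h

lemma Pmat_inv (w : Equiv.Perm (Fin n)) : (Pmat (k := k) w)⁻¹ = (Pmat (k := k) w)ᵀ :=
  Matrix.inv_eq_right_inv (Pmat_mul_transpose w)

lemma gauge_iff {g D₁ D₂ : Matrix (Fin n) (Fin n) (LaurentSeries k)} (hg : IsUnit g.det) :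
    g * D₁ * g⁻¹ - (g.map tauF) * g⁻¹ = D₂ ↔ g * D₁ - g.map tauF = D₂ * g := by
  constructor
  · intro h
    have h2 : (g * D₁ - g.map tauF) * g⁻¹ * g = D₂ * g := by
      rw [Matrix.sub_mul, h]
    rwa [Matrix.mul_assoc, Matrix.nonsing_inv_mul g hg, Matrix.mul_one] at h2
  · intro h
    have h2 : (g * D₁ - g.map tauF) * g⁻¹ = D₂ * g * g⁻¹ := by rw [h]
    rwa [Matrix.sub_mul, Matrix.mul_assoc D₂ g g⁻¹, Matrix.mul_nonsing_inv g hg,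
      Matrix.mul_one] at h2

end Stmt14Aux

/-- let `D¹, D²` be diagonal, supported in degrees `−r,…,0`, whose
coefficients of `z^{−r}` have pairwise distinct diagonal entries.  Then `D¹` and `D²`
are gauge equivalent under `GL_n(F)` iff `D² = P·D¹·P⁻¹ − diag(a)` for some permutation
matrix `P` (of some `w ∈ S_n`, with `P·e_j = e_{w(j)}`) and some `a ∈ ℤ^n`. -/
theorem stmt14 [IsAlgClosed k] [CharZero k] {n : ℕ} (r : ℕ) (hr : 1 ≤ r)
    (D₁ D₂ : Matrix (Fin n) (Fin n) (LaurentSeries k))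
    (hdiag1 : ∀ i j, i ≠ j → D₁ i j = 0)
    (hdiag2 : ∀ i j, i ≠ j → D₂ i j = 0)
    (hsupp1 : ∀ i, ∀ m : ℤ, (m < -(r : ℤ) ∨ 0 < m) → (D₁ i i).coeff m = 0)
    (hsupp2 : ∀ i, ∀ m : ℤ, (m < -(r : ℤ) ∨ 0 < m) → (D₂ i i).coeff m = 0)
    (hdist1 : ∀ i j, i ≠ j → (D₁ i i).coeff (-(r : ℤ)) ≠ (D₁ j j).coeff (-(r : ℤ)))
    (hdist2 : ∀ i j, i ≠ j → (D₂ i i).coeff (-(r : ℤ)) ≠ (D₂ j j).coeff (-(r : ℤ))) :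
    (∃ g : Matrix (Fin n) (Fin n) (LaurentSeries k),
      IsUnit g.det ∧ g * D₁ * g⁻¹ - (g.map tauF) * g⁻¹ = D₂)
    ↔
    (∃ (w : Equiv.Perm (Fin n)) (a : Fin n → ℤ),
      D₂ = (Matrix.of fun i j => if i = w j then (1 : LaurentSeries k) else 0) * D₁ *
            (Matrix.of fun i j => if i = w j then (1 : LaurentSeries k) else 0)⁻¹ -
            Matrix.diagonal (fun i => ((a i : ℤ) : LaurentSeries k))) := by
  have hD1diag : D₁ = Matrix.diagonal (fun i => D₁ i i) := by
    refine Matrix.ext fun i j => ?_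
    by_cases h : i = j
    · subst h; simp
    · rw [hdiag1 i j h, Matrix.diagonal_apply_ne _ h]
  constructor
  · rintro ⟨g, hu, heq⟩
    have key : g * D₁ - g.map tauF = D₂ * g := (Stmt14Aux.gauge_iff hu).1 heq
    have entry : ∀ i j, tauF (g i j) = (D₁ j j - D₂ i i) * g i j := by
      intro i j
      have h := congrFun (congrFun key i) j
      have h1 : (g * D₁) i j = g i j * D₁ j j := by
        rw [Matrix.mul_apply]
        exact Finset.sum_eq_single j (fun l _ hl => by rw [hdiag1 l j hl, mul_zero])
          (fun h => absurd (Finset.mem_univ _) h)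
      have h2 : (D₂ * g) i j = D₂ i i * g i j := by
        rw [Matrix.mul_apply]
        exact Finset.sum_eq_single i (fun l _ hl => by rw [hdiag2 i l (Ne.symm hl), zero_mul])
          (fun h => absurd (Finset.mem_univ _) h)
      rw [Matrix.sub_apply, Matrix.map_apply, h1, h2] at h
      linear_combination -h
    have hrow : ∀ i, ∃ j, g i j ≠ 0 := by
      intro i
      by_contra hcon
      push_neg at hcon
      exact hu.ne_zero (Matrix.det_eq_zero_of_row_eq_zero i hcon)
    choose σ hσ using hrow
    have hode : ∀ i, D₁ (σ i) (σ i) - D₂ i i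
        = HahnSeries.single 0 (((g i (σ i)).order : ℤ) : k) := by
      intro i
      refine Stmt14Aux.ode (hσ i) (entry i (σ i)) (fun m hm => ?_)
      rw [HahnSeries.coeff_sub, hsupp1 _ m (Or.inr hm), hsupp2 _ m (Or.inr hm), sub_zero]
    have hcoeffr : ∀ i, (D₂ i i).coeff (-(r:ℤ)) = (D₁ (σ i) (σ i)).coeff (-(r:ℤ)) := by
      intro i
      have h := congrArg (fun x => HahnSeries.coeff x (-(r:ℤ))) (hode i)
      simp only [HahnSeries.coeff_sub] at h
      rw [HahnSeries.coeff_single_of_ne (by omega : -(r:ℤ) ≠ 0)] at h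
      exact (sub_eq_zero.mp h).symm
    have hinj : Function.Injective σ := by
      intro i1 i2 hss
      by_contra hne
      exact hdist2 i1 i2 hne (by rw [hcoeffr i1, hcoeffr i2, hss])
    have hbij : Function.Bijective σ := Finite.injective_iff_bijective.1 hinj
    set e := Equiv.ofBijective σ hbij with he
    refine ⟨e.symm, fun i => (g i (σ i)).order, ?_⟩
    have hP : (Matrix.of fun i j => if i = e.symm j then (1:LaurentSeries k) else 0)
        = Stmt14Aux.Pmat e.symm := rfl
    rw [hP, Stmt14Aux.Pmat_inv, hD1diag, Stmt14Aux.Pmat_conj_diagonal]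
    refine Matrix.ext fun i j => ?_
    rw [Matrix.sub_apply]
    by_cases h : i = j
    · subst h
      rw [Matrix.diagonal_apply_eq, Matrix.diagonal_apply_eq]
      have hs : e.symm.symm i = σ i := by simp [he]
      rw [hs, Stmt14Aux.intCast_eq_single]
      linear_combination -(hode i)
    · rw [hdiag2 i j h, Matrix.diagonal_apply_ne _ h, Matrix.diagonal_apply_ne _ h,
        sub_zero]
  · rintro ⟨w, a, hD2⟩
    have hP : (Matrix.of fun i j => if i = w j then (1:LaurentSeries k) else 0)
        = Stmt14Aux.Pmat w := rfl
    rw [hP, Stmt14Aux.Pmat_inv, hD1diag, Stmt14Aux.Pmat_conj_diagonal] at hD2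
    set g : Matrix (Fin n) (Fin n) (LaurentSeries k) :=
      Matrix.diagonal (fun i => HahnSeries.single (a i) (1:k)) * Stmt14Aux.Pmat w with hg
    have hdet : IsUnit g.det := by
      rw [hg, Matrix.det_mul]
      refine IsUnit.mul ?_
        (Matrix.isUnit_det_of_right_inverse (Stmt14Aux.Pmat_mul_transpose w))
      rw [Matrix.det_diagonal]
      exact isUnit_iff_ne_zero.2 (Finset.prod_ne_zero_iff.2
        (fun i _ => HahnSeries.single_ne_zero one_ne_zero))
    refine ⟨g, hdet, (Stmt14Aux.gauge_iff hdet).2 ?_⟩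
    rw [hD2]
    nth_rewrite 1 [hD1diag]
    refine Matrix.ext fun i j => ?_
    have hgij : g i j = if i = w j then HahnSeries.single (a i) (1:k) else 0 := by
      rw [hg, Matrix.diagonal_mul]
      simp only [Stmt14Aux.Pmat, Matrix.of_apply]
      by_cases h : i = w j
      · rw [if_pos h, if_pos h, mul_one]
      · rw [if_neg h, if_neg h, mul_zero]
    simp only [Matrix.sub_apply, Matrix.map_apply, Matrix.mul_diagonal, Matrix.sub_mul,
      Matrix.diagonal_mul]
    rw [hgij]
    by_cases h : i = w j
    · rw [if_pos h]
      have hsymm : w.symm i = j := by rw [h, Equiv.symm_apply_apply]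
      rw [hsymm, Stmt14Aux.tauF_single, Stmt14Aux.intCast_eq_single,
        HahnSeries.single_mul_single, zero_add, mul_one, mul_comm]
    · rw [if_neg h, Stmt14Aux.tauF_zero]; simp
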